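/- For all positive integers n, |3ψ(n) + ψ(n+1)| ≤ 2^n. -/
import Mathlib


theorem stmt_1
    (psi : ℕ → ℤ)
    (hpsi0 : psi 0 = 1) (hpsi1 : psi 1 = 0)
    (hpsi : ∀ n : ℕ, 2 ≤ n → psi n = -2 * psi (n - 2) - psi (n - 1)) :
    ∀ n : ℕ, 1 ≤ n → |3 * psi n + psi (n + 1)| ≤ 2 ^ n := by
  have hrec : ∀ n : ℕ, psi (n + 2) = -2 * psi n - psi (n + 1) := by
    intro n
    have := hpsi (n + 2) (by omega)
    simpa using this
  have hQ : ∀ n : ℕ,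
      psi (n+1)^2 + psi (n+1) * psi n + 2 * psi n ^ 2 = 2 ^ (n+1) := by
    intro n
    induction n with
    | zero => simp [hpsi0, hpsi1]
    | succ k ih =>
      rw [hrec k]
      ring_nf
      ring_nf at ih
      nlinarith [ih]
  intro n hn
  rw [abs_le]
  have hsq : (3 * psi n + psi (n+1))^2 ≤ 7 * 2 ^ (n+1) := by
    have h := hQ n
    nlinarith [sq_nonneg (psi (n+1) - psi n), sq_nonneg (psi (n+1) + 6 * psi n),
      sq_nonneg (psi n)]
  rcases Nat.lt_or_ge n 4 with h4 | h4
  · interval_cases n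
    · have h2 := hrec 0
      simp [hpsi0, hpsi1] at h2
      constructor <;> simp [hpsi1, h2] <;> norm_num
    · have h2 := hrec 0
      have h3 := hrec 1
      simp [hpsi0, hpsi1] at h2
      rw [h2, hpsi1] at h3; norm_num at h3
      constructor <;> rw [h2, h3] <;> norm_num
    · have h2 := hrec 0
      have h3 := hrec 1
      have h4 := hrec 2
      simp [hpsi0, hpsi1] at h2
      rw [h2, hpsi1] at h3; norm_num at h3
      rw [h2, h3] at h4; norm_num at h4
      constructor <;> rw [h3, h4] <;> norm_num
  · have h16 : (16 : ℤ) ≤ 2 ^ n := by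
      calc (16 : ℤ) = 2 ^ 4 := by norm_num
      _ ≤ 2 ^ n := pow_le_pow_right₀ (by norm_num) h4
    have h2n : (2:ℤ) ^ (n+1) = 2 * 2 ^ n := by ring
    rw [h2n] at hsq
    constructor <;> nlinarith [sq_nonneg (2^n : ℤ)]
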